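/- Let q^2 be a primitive N-th root of unity, and let A, B be invertible endomorphisms of a finite-dimensional complex vector space V with AB = q^2 BA. Then N divides dim V. -/

import Mathlib

open Polynomial

/-- Evaluation of the characteristic polynomial of a matrix. -/
private lemma eval_charpoly_aux {n : Type*} [DecidableEq n] [Fintype n]
    (M : Matrix n n ℂ) (x : ℂ) :
    M.charpoly.eval x = (Matrix.diagonal (fun _ => x) - M).det := by
  rw [Matrix.charpoly, ← Polynomial.coe_evalRingHom, RingHom.map_det]
  congr 1
  ext i j
  by_cases h : i = j <;> simp [Matrix.charmatrix_apply, h, Matrix.diagonal]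

/-- Orbit-counting lemma: if `c` is a primitive `N`-th root of unity, `f` is invariant under
multiplication by `c`, and `S` is a finite set of nonzero complex numbers closed under
multiplication by `c`, then `N` divides the sum of `f` over `S`. -/
private lemma orbit_sum_aux {N : ℕ} (hN : 0 < N) {c : ℂ} (hc : IsPrimitiveRoot c N)
    (f : ℂ → ℕ) (hf : ∀ z, f (c * z) = f z) :
    ∀ (n : ℕ) (S : Finset ℂ), S.card = n → (0 : ℂ) ∉ S → (∀ z ∈ S, c * z ∈ S) →
      N ∣ ∑ z ∈ S, f z := by
  intro n
  induction n using Nat.strong_induction_on with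
  | _ n IH =>
    intro S hcard h0 hclosed
    rcases S.eq_empty_or_nonempty with rfl | ⟨a, ha⟩
    · simp
    have ha0 : a ≠ 0 := fun h => h0 (h ▸ ha)
    have hc0 : c ≠ 0 := hc.ne_zero hN.ne'
    -- all powers of the orbit are in S
    have horb : ∀ k : ℕ, c ^ k * a ∈ S := by
      intro k
      induction k with
      | zero => simpa using ha
      | succ k ih =>
        have := hclosed _ ih
        rwa [← mul_assoc, ← pow_succ'] at this
    have hforb : ∀ k : ℕ, f (c ^ k * a) = f a := by
      intro k
      induction k with
      | zero => simp
      | succ k ih =>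
        rw [pow_succ', mul_assoc, hf, ih]
    set O : Finset ℂ := (Finset.range N).image (fun k => c ^ k * a) with hO
    have hinj : Set.InjOn (fun k => c ^ k * a) (Finset.range N) := by
      intro i hi j hj hij
      simp only [Finset.coe_range, Set.mem_Iio] at hi hj
      exact hc.pow_inj hi hj (mul_right_cancel₀ ha0 hij)
    have hmemO : ∀ z : ℂ, z ∈ O ↔ ∃ k < N, z = c ^ k * a := by
      intro z
      simp only [hO, Finset.mem_image, Finset.mem_range]
      constructor
      · rintro ⟨k, hk, rfl⟩; exact ⟨k, hk, rfl⟩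
      · rintro ⟨k, hk, rfl⟩; exact ⟨k, hk, rfl⟩
    have hOS : O ⊆ S := by
      intro z hz
      obtain ⟨k, _, rfl⟩ := (hmemO z).mp hz
      exact horb k
    have hOsum : ∑ z ∈ O, f z = N * f a := by
      rw [hO, Finset.sum_image (fun i hi j hj h => hinj hi hj h)]
      simp [hforb, Finset.sum_const]
    -- the complement S \ O
    have h0' : (0 : ℂ) ∉ S \ O := fun h => h0 (Finset.mem_sdiff.mp h).1
    have hclosed' : ∀ z ∈ S \ O, c * z ∈ S \ O := by
      intro z hz
      rw [Finset.mem_sdiff] at hz ⊢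
      refine ⟨hclosed z hz.1, fun hmem => hz.2 ?_⟩
      obtain ⟨k, hk, hzk⟩ := (hmemO _).mp hmem
      rcases Nat.eq_zero_or_pos k with rfl | hkpos
      · -- c * z = a, so z = c^(N-1) * a
        refine (hmemO z).mpr ⟨N - 1, Nat.sub_lt hN one_pos, ?_⟩
        have h1 : c ^ N * z = c ^ (N - 1) * (c * z) := by
          rw [← mul_assoc, ← pow_succ, Nat.sub_add_cancel hN]
        rw [hc.pow_eq_one, one_mul] at h1
        rw [h1, hzk, pow_zero, one_mul]
      · -- c * z = c^k * a with k ≥ 1, so z = c^(k-1) * a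
        refine (hmemO z).mpr ⟨k - 1, lt_of_le_of_lt (Nat.sub_le k 1) hk, ?_⟩
        have h1 : c * z = c * (c ^ (k - 1) * a) := by
          rw [hzk, ← mul_assoc, ← pow_succ', Nat.sub_add_cancel hkpos]
        exact mul_left_cancel₀ hc0 h1
    have hlt : (S \ O).card < n := by
      rw [← hcard]
      have hne : O.Nonempty := ⟨a, (hmemO a).mpr ⟨0, hN, by simp⟩⟩
      exact Finset.card_lt_card (Finset.sdiff_ssubset hOS hne)
    have IH' := IH _ hlt (S \ O) rfl h0' hclosed'
    have hsplit : ∑ z ∈ S \ O, f z + ∑ z ∈ O, f z = ∑ z ∈ S, f z :=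
      Finset.sum_sdiff hOS
    rw [← hsplit, hOsum]
    exact dvd_add IH' ⟨f a, rfl⟩

/-- If `q^2` is a primitive `N`-th root of unity and `A, B` are invertible endomorphisms
of a finite-dimensional complex vector space with `A B = q^2 B A`, then `N` divides
the dimension. -/
theorem quantum_plane_dimension_divisible {N : ℕ} (hN : 0 < N) (q : ℂ)
    (hq : IsPrimitiveRoot (q ^ 2) N)
    {V : Type*} [AddCommGroup V] [Module ℂ V] [FiniteDimensional ℂ V]
    (A B : Module.End ℂ V) (hA : IsUnit A) (hB : IsUnit B)
    (hAB : A * B = (q ^ 2) • (B * A)) :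
    N ∣ Module.finrank ℂ V := by
  set c : ℂ := q ^ 2 with hc
  have hc0 : c ≠ 0 := hq.ne_zero hN.ne'
  set p := A.charpoly with hp
  -- Step 1: charpoly (c • A) = charpoly A via conjugation by B
  have hBbij : Function.Bijective B := (Module.End.isUnit_iff B).mp hB
  let e : V ≃ₗ[ℂ] V := LinearEquiv.ofBijective B hBbij
  have hconj : e.conj (c • A) = A := by
    ext x
    simp only [LinearEquiv.conj_apply, LinearMap.coe_comp, Function.comp_apply,
      LinearEquiv.coe_coe, LinearMap.smul_apply]
    show B (c • A (e.symm x)) = A x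
    rw [map_smul]
    have h := LinearMap.congr_fun hAB (e.symm x)
    simp only [Module.End.mul_apply, LinearMap.smul_apply] at h
    rw [← h]
    congr 1
    exact e.apply_symm_apply x
  have hcp : (c • A).charpoly = p := by
    conv_rhs => rw [hp, ← hconj]
    exact (e.charpoly_conj (c • A)).symm
  -- Step 2: basic facts about p
  have hndeg : p.natDegree = Module.finrank ℂ V := A.charpoly_natDegree
  have hmonic : p.Monic := A.charpoly_monic
  have hsplits : p.Splits := IsAlgClosed.splits p
  have hcard : Multiset.card p.roots = Module.finrank ℂ V := by
    rw [Polynomial.splits_iff_card_roots.mp hsplits, hndeg]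
  -- eval identity: p.eval x = c^(dim) * p.eval (c⁻¹ * x)
  have heval : ∀ x : ℂ, p.eval x = c ^ (Module.finrank ℂ V) * p.eval (c⁻¹ * x) := by
    intro x
    classical
    let b := Module.finBasis ℂ V
    have hA' : ((LinearMap.toMatrix b b) A).charpoly = p := A.charpoly_toMatrix b
    have hcA : ((LinearMap.toMatrix b b) (c • A)).charpoly = p := by
      rw [LinearMap.charpoly_toMatrix, hcp]
    set MA := (LinearMap.toMatrix b b) A with hMA
    have hsmul : (LinearMap.toMatrix b b) (c • A) = c • MA := by
      rw [hMA, map_smul]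
    calc p.eval x = ((c • MA).charpoly).eval x := by rw [← hcA, hsmul]
      _ = (Matrix.diagonal (fun _ => x) - c • MA).det := eval_charpoly_aux _ _
      _ = (c • (Matrix.diagonal (fun _ => c⁻¹ * x) - MA)).det := by
          congr 1
          rw [smul_sub]
          congr 1
          ext i j
          rcases eq_or_ne i j with rfl | h
          · simp [Matrix.smul_apply, ← mul_assoc, mul_inv_cancel₀ hc0]
          · simp [Matrix.diagonal_apply_ne _ h, Matrix.smul_apply]
      _ = c ^ (Fintype.card (Fin (Module.finrank ℂ V))) *
            (Matrix.diagonal (fun _ => c⁻¹ * x) - MA).det := Matrix.det_smul _ _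
      _ = c ^ (Module.finrank ℂ V) * p.eval (c⁻¹ * x) := by
          rw [Fintype.card_fin, ← eval_charpoly_aux, hA']
  -- Step 3: roots invariance
  have hroots : p.roots.map (fun z => c * z) = p.roots := by
    have hprod : p = (Multiset.map (fun a => X - C a) p.roots).prod :=
      hsplits.eq_prod_roots_of_monic hmonic
    have key : (Multiset.map (fun a => X - C a) (p.roots.map (fun z => c * z))).prod = p := by
      apply Polynomial.funext
      intro x
      rw [Polynomial.eval_multiset_prod, Multiset.map_map, Multiset.map_map]
      trans (p.roots.map (fun z => x - c * z)).prod
      · refine congrArg Multiset.prod (Multiset.map_congr rfl fun z _ => ?_)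
        simp
      trans (c ^ (Module.finrank ℂ V) * (p.roots.map (fun z => c⁻¹ * x - z)).prod)
      · have h2 : (p.roots.map (fun z => x - c * z))
            = (p.roots.map (fun z => c * (c⁻¹ * x - z))) := by
          refine Multiset.map_congr rfl fun z _ => ?_
          rw [mul_sub, ← mul_assoc, mul_inv_cancel₀ hc0, one_mul]
        rw [h2, Multiset.prod_map_mul, Multiset.map_const', Multiset.prod_replicate, hcard]
      · rw [heval x]
        congr 1
        conv_rhs => rw [hprod]
        rw [Polynomial.eval_multiset_prod, Multiset.map_map]
        refine congrArg Multiset.prod (Multiset.map_congr rfl fun z _ => ?_)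
        simp
    conv_rhs => rw [← key, Polynomial.roots_multiset_prod_X_sub_C]
  -- Step 4: 0 is not a root
  have h0 : (0 : ℂ) ∉ p.roots := by
    intro h
    have hroot : p.IsRoot 0 := Polynomial.isRoot_of_mem_roots h
    have hcc : Polynomial.constantCoeff p = 0 := by
      rw [Polynomial.constantCoeff_apply, Polynomial.coeff_zero_eq_eval_zero]
      exact hroot
    rw [hp, LinearMap.charpoly_constantCoeff_eq_zero_iff] at hcc
    obtain ⟨m, hm, hAm⟩ := hcc
    exact hm (((Module.End.isUnit_iff A).mp hA).injective (by simpa using hAm))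
  -- Step 5: counting
  classical
  have hsum : ∑ z ∈ p.roots.toFinset, p.roots.count z = Module.finrank ℂ V := by
    rw [Multiset.toFinset_sum_count_eq, hcard]
  have hfinal : N ∣ ∑ z ∈ p.roots.toFinset, p.roots.count z := by
    refine orbit_sum_aux hN hq (fun z => p.roots.count z) ?_ _ p.roots.toFinset rfl ?_ ?_
    · intro z
      show Multiset.count (c * z) p.roots = Multiset.count z p.roots
      conv_lhs => rw [← hroots]
      exact Multiset.count_map_eq_count' _ _ (mul_right_injective₀ hc0) z
    · intro h
      exact h0 (Multiset.mem_toFinset.mp h)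
    · intro z hz
      rw [Multiset.mem_toFinset] at hz ⊢
      rw [← hroots]
      exact Multiset.mem_map_of_mem _ hz
  rwa [hsum] at hfinal
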